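/- Let F be a linear ordered field equipped with its order topology and X a completely F-regular space that is an almost P_F-space (every nonempty zero set Z(f) with f ∈ C(X,F) has nonempty interior in X). Then for an intermediate ring A(X,F), every maximal ideal of A(X,F) is a z°-ideal if and only if A(X,F) = C(X,F). -/

import Mathlib

open Set

/-- `Pz a` : the intersection of all minimal prime ideals of `R` which contain `a`. -/
def Pz {R : Type*} [CommRing R] (a : R) : Set R :=
  ⋂ P ∈ {P : Ideal R | P ∈ minimalPrimes R ∧ a ∈ P}, (P : Set R)

/-- A proper ideal `I` is a `z°`-ideal if `Pz a ⊆ I` for every `a ∈ I`. -/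
def IsZoIdeal {R : Type*} [CommRing R] (I : Ideal R) : Prop :=
  I ≠ ⊤ ∧ ∀ a ∈ I, Pz a ⊆ (I : Set R)

/-- The zero set `Z(f)` of a continuous function `f`. -/
def ZSet {X F : Type*} [TopologicalSpace X] [TopologicalSpace F] [Zero F]
    (f : C(X, F)) : Set X := {x | f x = 0}

/-- `f` is bounded over `X` (i.e. `f ∈ B(X,F)`). -/
def BddF {X F : Type*} [TopologicalSpace X] [Field F] [LinearOrder F] [IsStrictOrderedRing F] [TopologicalSpace F]
    (f : C(X, F)) : Prop := ∃ l : F, 0 < l ∧ ∀ x, |f x| ≤ l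

/-- `X` is completely `F`-regular: Hausdorff, and points can be separated from closed
sets by bounded `F`-valued continuous functions. -/
def CompletelyFRegular (X F : Type*) [TopologicalSpace X] [Field F] [LinearOrder F] [IsStrictOrderedRing F]
    [TopologicalSpace F] : Prop :=
  T2Space X ∧ ∀ K : Set X, IsClosed K → ∀ x ∉ K, ∃ f : C(X, F),
    BddF f ∧ f x = 0 ∧ ∀ k ∈ K, f k = 1

/-- `A` is an intermediate ring: a subring of `C(X,F)` containing all of `B(X,F)`. -/
def IsIntermediate {X F : Type*} [TopologicalSpace X] [Field F] [LinearOrder F] [IsStrictOrderedRing F]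
    [TopologicalSpace F] [OrderTopology F] (A : Subring C(X, F)) : Prop :=
  ∀ f : C(X, F), BddF f → f ∈ A

/-- An ideal of closed sets in `X`: a nonempty family of closed sets, closed under
finite unions and under passing to closed subsets. -/
def IsIdealOfClosedSets {X : Type*} [TopologicalSpace X] (P : Set (Set X)) : Prop :=
  P.Nonempty ∧ (∀ A ∈ P, IsClosed A) ∧ (∀ A ∈ P, ∀ B ∈ P, A ∪ B ∈ P) ∧
    ∀ C : Set X, IsClosed C → ∀ A ∈ P, C ⊆ A → C ∈ P

/-- `X` is an almost `P_F`-space: every nonempty zero set has nonempty interior. -/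
def AlmostPF (X F : Type*) [TopologicalSpace X] [Field F] [LinearOrder F] [IsStrictOrderedRing F]
    [TopologicalSpace F] : Prop :=
  ∀ f : C(X, F), (ZSet f).Nonempty → (interior (ZSet f)).Nonempty


/- ### Auxiliary lemmas -/

lemma mem_Pz_iff {R : Type*} [CommRing R] {a b : R} :
    b ∈ Pz a ↔ ∀ P : Ideal R, P ∈ minimalPrimes R → a ∈ P → b ∈ P := by
  simp [Pz, Set.mem_iInter, and_imp]

/-- An element that is not a zero divisor lies in no minimal prime. -/
lemma regular_not_mem_minimalPrimes {R : Type*} [CommRing R] {x : R}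
    (hx : ∀ z, x * z = 0 → z = 0) {P : Ideal R} (hP : P ∈ minimalPrimes R) : x ∉ P := by
  intro hxP
  have hPp : P.IsPrime := hP.1.1
  set S : Submonoid R := Submonoid.closure (insert x ((P : Set R)ᶜ)) with hS
  have hform : ∀ z ∈ S, ∃ (n : ℕ) (s : R), s ∉ P ∧ z = x ^ n * s := by
    intro z hz
    induction hz using Submonoid.closure_induction with
    | mem w hw =>
        rcases hw with rfl | hw
        · exact ⟨1, 1, fun h => hPp.ne_top (P.eq_top_of_isUnit_mem h isUnit_one), by ring⟩
        · exact ⟨0, w, hw, by ring⟩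
    | one => exact ⟨0, 1, fun h => hPp.ne_top (P.eq_top_of_isUnit_mem h isUnit_one), by ring⟩
    | mul u v hu hv ihu ihv =>
        obtain ⟨n, s, hs, rfl⟩ := ihu
        obtain ⟨m, t, ht, rfl⟩ := ihv
        exact ⟨n + m, s * t, fun h => ((hPp.mem_or_mem h).elim hs ht), by ring⟩
  have hpow : ∀ (n : ℕ) (s : R), x ^ n * s = 0 → s = 0 := by
    intro n
    induction n with
    | zero => intro s h; simpa using h
    | succ n ih =>
        intro s h
        have : x ^ n * (x * s) = 0 := by rw [← h]; ring
        exact hx s (ih _ this)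
  have h0 : (0 : R) ∉ S := by
    intro h0
    obtain ⟨n, s, hs, hzs⟩ := hform 0 h0
    exact hs (by rw [hpow n s hzs.symm]; exact P.zero_mem)
  have hdisj : Disjoint ((⊥ : Ideal R) : Set R) (S : Set R) := by
    rw [Set.disjoint_left]
    rintro z hz
    simp only [SetLike.mem_coe, Ideal.mem_bot] at hz
    subst hz
    exact h0
  obtain ⟨p, hp, -, hpd⟩ := Ideal.exists_le_prime_disjoint (⊥ : Ideal R) S hdisj
  have hpP : p ≤ P := by
    intro z hz
    by_contra hzP
    exact (Set.disjoint_left.mp hpd hz) (Submonoid.subset_closure (Or.inr hzP))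
  have hPx : P ≤ p := hP.2 ⟨hp, bot_le⟩ hpP
  exact (Set.disjoint_left.mp hpd (hPx hxP)) (Submonoid.subset_closure (Or.inl rfl))


/-- Transfer of `Pz` along a ring isomorphism. -/
lemma Pz_map {R S : Type*} [CommRing R] [CommRing S] (e : R ≃+* S) {a b : R}
    (hb : b ∈ Pz a) : e b ∈ Pz (e a) := by
  rw [mem_Pz_iff] at hb ⊢
  intro Q hQ hQa
  have hmin : Q.comap e.toRingHom ∈ minimalPrimes R := by
    have := Ideal.minimal_primes_comap_of_surjective
      (e.surjective) (I := (⊥ : Ideal S)) (f := e.toRingHom) hQ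
    rwa [Ideal.comap_bot_of_injective e.toRingHom e.injective] at this
  have hb' : b ∈ Q.comap e.toRingHom := hb _ hmin (by rw [Ideal.mem_comap]; exact hQa)
  rwa [Ideal.mem_comap] at hb'

section Topological

variable {X F : Type*} [TopologicalSpace X] [Field F] [LinearOrder F] [IsStrictOrderedRing F]
    [TopologicalSpace F] [OrderTopology F]

lemma isUnit_of_nowhere_zero {f : C(X, F)} (hf : ∀ x, f x ≠ 0) : IsUnit f := by
  refine IsUnit.of_mul_eq_one (a := f) ⟨fun x => (f x)⁻¹, f.continuous.inv₀ hf⟩ ?_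
  ext x
  exact mul_inv_cancel₀ (hf x)

/-- Maximal ideals of `C(X,F)` are z-ideals. -/
lemma maximal_zideal {M : Ideal C(X, F)} (hM : M.IsMaximal) {f g : C(X, F)}
    (hf : f ∈ M) (h : ∀ x, f x = 0 → g x = 0) : g ∈ M := by
  by_contra hg
  obtain ⟨y, i, hi, hyi⟩ := hM.exists_inv hg
  have hu : ∀ x, (i * i + f * f) x ≠ 0 := by
    intro x
    by_cases hfx : f x = 0
    · have hgx : g x = 0 := h x hfx
      have : i x = 1 := by
        have := congrFun (congrArg (fun p : C(X,F) => (p : X → F)) hyi) x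
        simp [hgx] at this
        linarith [this]
      simp [ContinuousMap.add_apply, ContinuousMap.mul_apply, hfx, this]
    · have h1 : 0 < f x * f x := mul_self_pos.mpr hfx
      have h2 : 0 ≤ i x * i x := mul_self_nonneg _
      simp only [ContinuousMap.add_apply, ContinuousMap.mul_apply]
      positivity
  have hmem : i * i + f * f ∈ M := M.add_mem (M.mul_mem_left i hi) (M.mul_mem_left f hf)
  exact hM.ne_top (M.eq_top_of_isUnit_mem hmem (isUnit_of_nowhere_zero hu))

/-- The evaluation ring homomorphism at a point. -/
def evRH (y : X) : C(X, F) →+* F :=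
  (Pi.evalRingHom (fun _ => F) y).comp ContinuousMap.coeFnRingHom

lemma evRH_surj (y : X) : Function.Surjective (evRH (F := F) y) :=
  fun c => ⟨ContinuousMap.const X c, rfl⟩

/-- Every maximal ideal of `C(X,F)` is a z°-ideal when `X` is an almost `P_F`-space. -/
lemma czo (hX : CompletelyFRegular X F) (hap : AlmostPF X F)
    (M : Ideal C(X, F)) (hM : M.IsMaximal) {a : C(X, F)} (ha : a ∈ M) :
    Pz a ⊆ (M : Set C(X, F)) := by
  intro b hb
  rw [mem_Pz_iff] at hb
  have key : ∀ x, a x = 0 → b x = 0 := by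
    intro x hax
    by_contra hbx
    have hT2 : T2Space X := hX.1
    set U : Set X := {z | b z ≠ 0} with hU
    have hUopen : IsOpen U := isOpen_ne_fun b.continuous continuous_const
    have hxU : x ∈ U := hbx
    obtain ⟨g, -, hgx, hgK⟩ := hX.2 Uᶜ hUopen.isClosed_compl x (by simpa using hxU)
    set c : C(X, F) := a * a + g * g with hc
    have hZc : ∀ z, z ∈ ZSet c ↔ a z = 0 ∧ g z = 0 := by
      intro z
      simp only [ZSet, Set.mem_setOf_eq, hc, ContinuousMap.add_apply, ContinuousMap.mul_apply]
      constructor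
      · intro hz
        have h1 : a z * a z = 0 ∧ g z * g z = 0 :=
          (add_eq_zero_iff_of_nonneg (mul_self_nonneg _) (mul_self_nonneg _)).mp hz
        exact ⟨mul_self_eq_zero.mp h1.1, mul_self_eq_zero.mp h1.2⟩
      · rintro ⟨h1, h2⟩
        rw [h1, h2]; ring
    have hxZc : x ∈ ZSet c := (hZc x).mpr ⟨hax, hgx⟩
    obtain ⟨y, hy⟩ := hap c ⟨x, hxZc⟩
    have hyZc : y ∈ ZSet c := interior_subset hy
    have hyU : y ∈ U := by
      by_contra hyU
      have := hgK y hyU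
      rw [((hZc y).mp hyZc).2] at this
      exact zero_ne_one this
    have hyint : y ∈ interior (ZSet a) := by
      refine interior_mono ?_ hy
      intro z hz
      exact ((hZc z).mp hz).1
    set My : Ideal C(X, F) := RingHom.ker (evRH (F := F) y) with hMy
    have hMymax : My.IsMaximal := RingHom.ker_isMaximal_of_surjective _ (evRH_surj y)
    have : My.IsPrime := hMymax.isPrime
    obtain ⟨P, hP, hPle⟩ :=
      Ideal.exists_minimalPrimes_le (I := (⊥ : Ideal C(X, F))) bot_le (J := My)
    have hPprime : P.IsPrime := hP.1.1
    obtain ⟨g', -, hg'y, hg'K⟩ := hX.2 (interior (ZSet a))ᶜ isOpen_interior.isClosed_compl y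
      (by simpa using hyint)
    have hprod : a * (g' - 1) = 0 := by
      ext z
      simp only [ContinuousMap.mul_apply, ContinuousMap.sub_apply, ContinuousMap.one_apply,
        ContinuousMap.zero_apply]
      by_cases hz : z ∈ interior (ZSet a)
      · have hz' : z ∈ ZSet a := interior_subset hz
        rw [show a z = 0 from hz']; ring
      · rw [hg'K z hz]; ring
    have haP : a ∈ P := by
      have h0 : a * (g' - 1) ∈ P := by rw [hprod]; exact P.zero_mem
      rcases hPprime.mem_or_mem h0 with h | h
      · exact h
      · exfalso
        have : g' - 1 ∈ My := hPle h
        rw [hMy, RingHom.mem_ker] at this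
        have hval : g' y - 1 = 0 := this
        rw [hg'y] at hval
        simp at hval
    have hbP : b ∈ P := hb P hP haP
    have : b ∈ My := hPle hbP
    rw [hMy, RingHom.mem_ker] at this
    exact hyU this
  exact maximal_zideal hM ha key

end Topological

set_option maxHeartbeats 1000000 in
set_option synthInstance.maxHeartbeats 1000000 in
/-- For an almost P_F-space X and an intermediate ring A(X,F): every maximal ideal of
A(X,F) is a z°-ideal iff A(X,F) = C(X,F). -/
theorem stmt16 {X F : Type*} [TopologicalSpace X] [Field F] [LinearOrder F] [IsStrictOrderedRing F]
    [TopologicalSpace F] [OrderTopology F]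
    (hX : CompletelyFRegular X F) (hap : AlmostPF X F)
    (A : Subring C(X, F)) (hA : IsIntermediate A) :
    (∀ M : Ideal A, M.IsMaximal → ∀ a ∈ M, Pz a ⊆ (M : Set A)) ↔ A = ⊤ := by
  constructor
  · -- forward direction
    intro h
    by_contra hne
    obtain ⟨g, hg⟩ : ∃ g : C(X, F), g ∉ A := by
      by_contra h'
      push_neg at h'
      exact hne ((Subring.eq_top_iff' A).mpr h')
    set w : C(X, F) := 1 + g * g with hwdef
    have hw1 : ∀ x, (1 : F) ≤ w x := by
      intro x
      simp only [hwdef, ContinuousMap.add_apply, ContinuousMap.one_apply,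
        ContinuousMap.mul_apply]
      nlinarith [mul_self_nonneg (g x)]
    have hwpos : ∀ x, (0 : F) < w x := fun x => lt_of_lt_of_le one_pos (hw1 x)
    have hw0 : ∀ x, w x ≠ 0 := fun x => ne_of_gt (hwpos x)
    set u : C(X, F) := ⟨fun x => (w x)⁻¹, w.continuous.inv₀ hw0⟩ with hudef
    have hu_apply : ∀ x, u x = (w x)⁻¹ := fun _ => rfl
    have hu0 : ∀ x, u x ≠ 0 := fun x => by
      rw [hu_apply]; exact inv_ne_zero (hw0 x)
    have huB : BddF u := by
      refine ⟨1, one_pos, fun x => ?_⟩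
      rw [hu_apply, abs_of_pos (inv_pos.mpr (hwpos x))]
      calc (w x)⁻¹ ≤ w x * (w x)⁻¹ :=
            le_mul_of_one_le_left (le_of_lt (inv_pos.mpr (hwpos x))) (hw1 x)
        _ = 1 := mul_inv_cancel₀ (hw0 x)
    have hvB : BddF (g * u) := by
      refine ⟨1, one_pos, fun x => ?_⟩
      have habs : |g x| ≤ w x := by
        simp only [hwdef, ContinuousMap.add_apply, ContinuousMap.one_apply,
          ContinuousMap.mul_apply]
        nlinarith [abs_nonneg (g x), abs_mul_abs_self (g x), sq_nonneg (|g x| - 1)]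
      have : |(g * u) x| = |g x| * (w x)⁻¹ := by
        rw [ContinuousMap.mul_apply, abs_mul, hu_apply, abs_of_pos (inv_pos.mpr (hwpos x))]
      rw [this]
      calc |g x| * (w x)⁻¹ ≤ w x * (w x)⁻¹ :=
            mul_le_mul_of_nonneg_right habs (le_of_lt (inv_pos.mpr (hwpos x)))
        _ = 1 := mul_inv_cancel₀ (hw0 x)
    have huA : u ∈ A := hA u huB
    have hvA : g * u ∈ A := hA _ hvB
    set uA : A := ⟨u, huA⟩ with huAdef
    have hreg : ∀ z : A, uA * z = 0 → z = 0 := by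
      intro z hz
      have hz' : u * (z : C(X, F)) = 0 := congrArg Subtype.val hz
      ext x
      have := congrFun (congrArg (fun p : C(X,F) => (p : X → F)) hz') x
      simp only [ContinuousMap.mul_apply, ContinuousMap.zero_apply] at this ⊢
      exact (mul_eq_zero.mp this).resolve_left (hu0 x)
    have hnotunit : ¬ IsUnit uA := by
      intro hunit
      obtain ⟨c, hc⟩ := hunit.exists_right_inv
      have hc' : u * (c : C(X, F)) = 1 := congrArg Subtype.val hc
      have hcw : (c : C(X, F)) = w := by
        ext x
        have := congrFun (congrArg (fun p : C(X,F) => (p : X → F)) hc') x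
        simp only [ContinuousMap.mul_apply, ContinuousMap.one_apply, hu_apply] at this
        exact ((inv_mul_eq_one₀ (hw0 x)).mp this).symm
      have hwA : w ∈ A := hcw ▸ c.2
      have : g ∈ A := by
        have hgv : (g * u) * w = g := by
          ext x
          simp only [ContinuousMap.mul_apply, hu_apply]
          rw [mul_assoc, inv_mul_cancel₀ (hw0 x), mul_one]
        exact hgv ▸ A.mul_mem hvA hwA
      exact hg this
    have hspan : Ideal.span {uA} ≠ ⊤ := fun hc =>
      hnotunit (Ideal.span_singleton_eq_top.mp hc)
    obtain ⟨M, hMmax, hle⟩ := Ideal.exists_le_maximal _ hspan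
    have huM : uA ∈ M := hle (Ideal.subset_span rfl)
    have h1 : (1 : A) ∈ Pz uA := by
      rw [mem_Pz_iff]
      intro P hP hmem
      exact absurd hmem (regular_not_mem_minimalPrimes hreg hP)
    have : (1 : A) ∈ M := h M hMmax uA huM h1
    exact hMmax.ne_top (Ideal.eq_top_iff_one M |>.mpr this)
  · -- backward direction
    intro hAtop
    subst hAtop
    intro M hM a haM b hb
    set e : ((⊤ : Subring C(X, F)) ≃+* C(X, F)) := Subring.topEquiv with he
    haveI : M.IsMaximal := hM
    set M' : Ideal C(X, F) := Ideal.comap e.symm.toRingHom M with hM'def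
    have hM'max : M'.IsMaximal :=
      Ideal.comap_isMaximal_of_surjective _ (EquivLike.surjective e.symm)
    have haM' : e a ∈ M' := by
      rw [hM'def, Ideal.mem_comap]
      simp only [RingEquiv.toRingHom_eq_coe, RingHom.coe_coe, RingEquiv.symm_apply_apply]
      exact haM
    have hbPz : e b ∈ Pz (e a) := Pz_map e hb
    have hfin := czo hX hap M' hM'max haM' hbPz
    rw [SetLike.mem_coe, hM'def, Ideal.mem_comap] at hfin
    simp only [RingEquiv.toRingHom_eq_coe, RingHom.coe_coe, RingEquiv.symm_apply_apply] at hfin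
    exact hfin
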